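/- Let u, v, h₀ : ℝ → ℝ satisfy u' = -τu + fv - h_x/F², v' = -fu - τv - h_y/F², and h₀' = -h_x u - h_y v, with τ > 0. Then h₀(t)/t → τ(h_x² + h_y²)/(F²(f² + τ²)) as t → ∞; i.e., the free surface height offset grows asymptotically linearly at rate τ(h_x² + h_y²)/(F²(f² + τ²)). -/

import Mathlib

open Filter Real

/-- If `h` has derivative `d` everywhere and `d → L` at `+∞`, then `h t / t → L`. -/
lemma slope_tendsto_of_deriv_tendsto {h d : ℝ → ℝ} {L : ℝ}
    (hd : ∀ t, HasDerivAt h (d t) t)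
    (hL : Tendsto d atTop (nhds L)) :
    Tendsto (fun t => h t / t) atTop (nhds L) := by
  rw [Metric.tendsto_atTop]
  intro ε hε
  obtain ⟨T, hT⟩ := (Metric.tendsto_atTop.mp hL) (ε / 2) (by positivity)
  set T₀ : ℝ := max T 0 with hT₀def
  have hT₀0 : (0:ℝ) ≤ T₀ := le_max_right _ _
  set g : ℝ → ℝ := fun s => h s - L * s with hg
  have hg' : ∀ s ∈ Set.Ici T₀, HasDerivWithinAt g (d s - L) (Set.Ici T₀) s := by
    intro s _
    have : HasDerivAt g (d s - L * 1) s := (hd s).sub ((hasDerivAt_id s).const_mul L)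
    simpa using this.hasDerivWithinAt
  have hbound : ∀ s ∈ Set.Ici T₀, ‖d s - L‖ ≤ ε / 2 := by
    intro s hs
    have := hT s (le_trans (le_max_left T 0) hs)
    rw [Real.dist_eq] at this
    exact le_of_lt (by simpa using this)
  have key : ∀ t ∈ Set.Ici T₀, ‖g t - g T₀‖ ≤ ε / 2 * ‖t - T₀‖ :=
    fun t ht => (convex_Ici T₀).norm_image_sub_le_of_norm_hasDerivWithin_le hg' hbound
      (Set.self_mem_Ici) ht
  refine ⟨max (T₀ + 1) (2 * |g T₀| / ε + 1), fun t ht => ?_⟩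
  have ht1 : T₀ + 1 ≤ t := le_trans (le_max_left _ _) ht
  have ht2 : 2 * |g T₀| / ε + 1 ≤ t := le_trans (le_max_right _ _) ht
  have htpos : 0 < t := by linarith
  have htT₀ : T₀ ≤ t := by linarith
  have hgt : |g t| ≤ |g T₀| + ε / 2 * t := by
    have := key t htT₀
    have habs : |g t - g T₀| ≤ ε / 2 * (t - T₀) := by
      simpa [Real.norm_eq_abs, abs_of_nonneg (sub_nonneg.mpr htT₀)] using this
    have : |g t| ≤ |g T₀| + |g t - g T₀| := by
      have := abs_add_le (g T₀) (g t - g T₀); simpa using this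
    nlinarith [abs_nonneg (g T₀)]
  have hsmall : |g T₀| < ε / 2 * t := by
    have h1 : 2 * |g T₀| / ε < t := by linarith
    have := (div_lt_iff₀ hε).mp h1
    nlinarith
  rw [Real.dist_eq]
  have heq : h t / t - L = g t / t := by
    field_simp [hg]
    ring
  rw [heq, abs_div, abs_of_pos htpos, div_lt_iff₀ htpos]
  calc |g t| ≤ |g T₀| + ε / 2 * t := hgt
    _ < ε / 2 * t + ε / 2 * t := by linarith
    _ = ε * t := by ring

theorem stmt_2 (τ f F hx hy : ℝ) (hτ : 0 < τ) (hF : F ≠ 0) (u v h0 : ℝ → ℝ)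
    (hu : ∀ t : ℝ, HasDerivAt u (-τ * u t + f * v t - hx / F ^ 2) t)
    (hv : ∀ t : ℝ, HasDerivAt v (-f * u t - τ * v t - hy / F ^ 2) t)
    (hh : ∀ t : ℝ, HasDerivAt h0 (-hx * u t - hy * v t) t) :
    Filter.Tendsto (fun t => h0 t / t) Filter.atTop
      (nhds (τ * (hx ^ 2 + hy ^ 2) / (F ^ 2 * (f ^ 2 + τ ^ 2)))) := by
  have hD : F ^ 2 * (f ^ 2 + τ ^ 2) ≠ 0 := by positivity
  have hden : f ^ 2 + τ ^ 2 ≠ 0 := by positivity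
  set D : ℝ := F ^ 2 * (f ^ 2 + τ ^ 2) with hDdef
  set us : ℝ := (-τ * hx - f * hy) / D with husdef
  set vs : ℝ := (f * hx - τ * hy) / D with hvsdef
  set U : ℝ → ℝ := fun t => u t - us with hUdef
  set V : ℝ → ℝ := fun t => v t - vs with hVdef
  have hU : ∀ t, HasDerivAt U (-τ * U t + f * V t) t := by
    intro t
    have h1 : HasDerivAt U (-τ * u t + f * v t - hx / F ^ 2) t := (hu t).sub_const us
    convert h1 using 1
    simp only [hUdef, hVdef, husdef, hvsdef, hDdef]
    field_simp
    ring
  have hV : ∀ t, HasDerivAt V (-f * U t - τ * V t) t := by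
    intro t
    have h1 : HasDerivAt V (-f * u t - τ * v t - hy / F ^ 2) t := (hv t).sub_const vs
    convert h1 using 1
    simp only [hUdef, hVdef, husdef, hvsdef, hDdef]
    field_simp
    ring
  set r : ℝ → ℝ := fun t => U t ^ 2 + V t ^ 2 with hrdef
  have hr : ∀ t, HasDerivAt r (-(2 * τ) * r t) t := by
    intro t
    have h1 : HasDerivAt (fun t => U t ^ 2 + V t ^ 2)
        (2 * U t ^ (2-1) * (-τ * U t + f * V t) + 2 * V t ^ (2-1) * (-f * U t - τ * V t)) t :=
      ((hU t).pow 2).add ((hV t).pow 2)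
    convert h1 using 1
    simp [hrdef]; ring
  -- r t = r 0 * exp(-(2τ) t)
  have hE : ∀ t, r t * Real.exp (2 * τ * t) = r 0 := by
    have hEd : ∀ t, HasDerivAt (fun t => r t * Real.exp (2 * τ * t)) 0 t := by
      intro t
      have h2 : HasDerivAt (fun t => Real.exp (2 * τ * t)) (Real.exp (2 * τ * t) * (2 * τ)) t := by
        have := ((hasDerivAt_id t).const_mul (2 * τ)).exp
        simpa using this
      have := (hr t).mul h2
      exact this.congr_deriv (by ring)
    have hdiff : Differentiable ℝ (fun t => r t * Real.exp (2 * τ * t)) :=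
      fun t => (hEd t).differentiableAt
    intro t
    have := is_const_of_deriv_eq_zero hdiff (fun x => (hEd x).deriv) t 0
    simpa using this
  have hrval : ∀ t, r t = r 0 * Real.exp (-(2 * τ) * t) := by
    intro t
    calc r t = r t * Real.exp (2 * τ * t + -(2 * τ) * t) := by
          rw [show 2 * τ * t + -(2 * τ) * t = 0 by ring, Real.exp_zero, mul_one]
      _ = r t * Real.exp (2 * τ * t) * Real.exp (-(2 * τ) * t) := by rw [Real.exp_add]; ring
      _ = r 0 * Real.exp (-(2 * τ) * t) := by rw [hE t]
  have hr0 : Tendsto r atTop (nhds 0) := by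
    have h1 : Tendsto (fun t : ℝ => Real.exp (-(2 * τ) * t)) atTop (nhds 0) := by
      apply Real.tendsto_exp_atBot.comp
      apply Tendsto.const_mul_atTop_of_neg (by linarith) tendsto_id
    have := h1.const_mul (r 0)
    simp only [mul_zero] at this
    exact Tendsto.congr (fun t => (hrval t).symm) this
  have hsq : Tendsto (fun t => Real.sqrt (r t)) atTop (nhds 0) := by
    have := (Real.continuous_sqrt.tendsto 0).comp hr0
    rwa [Real.sqrt_zero] at this
  have hU0 : Tendsto U atTop (nhds 0) := by
    apply squeeze_zero_norm (a := fun t => Real.sqrt (r t)) _ hsq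
    intro t
    rw [Real.norm_eq_abs, ← Real.sqrt_sq_eq_abs]
    have hrt : r t = U t ^ 2 + V t ^ 2 := rfl
    exact Real.sqrt_le_sqrt (by rw [hrt]; nlinarith [sq_nonneg (V t)])
  have hV0 : Tendsto V atTop (nhds 0) := by
    apply squeeze_zero_norm (a := fun t => Real.sqrt (r t)) _ hsq
    intro t
    rw [Real.norm_eq_abs, ← Real.sqrt_sq_eq_abs]
    have hrt : r t = U t ^ 2 + V t ^ 2 := rfl
    exact Real.sqrt_le_sqrt (by rw [hrt]; nlinarith [sq_nonneg (U t)])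
  -- derivative of h0 tends to L
  have hdL : Tendsto (fun t => -hx * u t - hy * v t) atTop
      (nhds (τ * (hx ^ 2 + hy ^ 2) / (F ^ 2 * (f ^ 2 + τ ^ 2)))) := by
    have h1 : Tendsto (fun t => -hx * (U t + us) - hy * (V t + vs)) atTop
        (nhds (-hx * (0 + us) - hy * (0 + vs))) := by
      exact ((hU0.add_const us).const_mul (-hx)).sub ((hV0.add_const vs).const_mul hy)
    have heq : (fun t => -hx * (U t + us) - hy * (V t + vs)) = fun t => -hx * u t - hy * v t := by
      funext t; simp [hUdef, hVdef]
    have hval : -hx * (0 + us) - hy * (0 + vs) = τ * (hx ^ 2 + hy ^ 2) / (F ^ 2 * (f ^ 2 + τ ^ 2)) := by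
      simp only [husdef, hvsdef, hDdef, zero_add]
      field_simp
      ring
    rw [heq, hval] at h1
    exact h1
  exact slope_tendsto_of_deriv_tendsto hh hdL
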